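/- Let X be a topological space and let f : X → ℝ be a continuous function such that for every ε > 0 there exists a countable cover of X by clopen sets on each of which the oscillation of f is at most ε (i.e., f ∈ U_{ℵ₀}(X)). Then the zero-set Z(f) = f⁻¹({0}) is the intersection of a countable family of clopen subsets of X. -/
import Mathlib


open Set

theorem stmt4 {X : Type*} [TopologicalSpace X] (f : X → ℝ) (hf : Continuous f)
    (h : ∀ ε : ℝ, 0 < ε → ∃ 𝒜 : Set (Set X), 𝒜.Countable ∧ ⋃₀ 𝒜 = Set.univ ∧
      ∀ A ∈ 𝒜, IsClopen A ∧ ∀ x ∈ A, ∀ y ∈ A, |f x - f y| ≤ ε) :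
    ∃ 𝒞 : Set (Set X), 𝒞.Countable ∧ (∀ A ∈ 𝒞, IsClopen A) ∧ f ⁻¹' {0} = ⋂₀ 𝒞 := by
  set Z : Set X := f ⁻¹' {0} with hZ
  choose F hc hu hp using fun n : ℕ => h (1 / (n + 1)) (by positivity)
  refine ⟨⋃ n : ℕ, (fun A => Aᶜ) '' {A ∈ F n | A ∩ Z = ∅}, ?_, ?_, ?_⟩
  · exact countable_iUnion fun n => (((hc n).mono (sep_subset _ _)).image _)
  · rintro B hB
    simp only [mem_iUnion, mem_image, mem_setOf_eq] at hB
    obtain ⟨n, A, ⟨hA, -⟩, rfl⟩ := hB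
    exact (hp n A hA).1.compl
  · ext x
    simp only [mem_sInter, mem_iUnion, mem_image, mem_setOf_eq]
    constructor
    · rintro hx B ⟨n, A, ⟨hA, hdisj⟩, rfl⟩
      intro hxA
      have : x ∈ A ∩ Z := ⟨hxA, hx⟩
      rw [hdisj] at this
      exact this
    · intro hx
      by_contra hxZ
      have hfx : |f x| > 0 := by
        simp only [hZ, mem_preimage, mem_singleton_iff] at hxZ
        exact abs_pos.mpr hxZ
      obtain ⟨n, hn⟩ := exists_nat_one_div_lt hfx
      have hxU : x ∈ ⋃₀ F n := by rw [hu n]; trivial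
      obtain ⟨A, hA, hxA⟩ := hxU
      have hAZ : A ∩ Z = ∅ := by
        by_contra hne
        obtain ⟨y, hyA, hyZ⟩ := nonempty_iff_ne_empty.mpr hne
        have := (hp n A hA).2 x hxA y hyA
        simp only [hZ, mem_preimage, mem_singleton_iff] at hyZ
        rw [hyZ, sub_zero] at this
        linarith
      exact hx Aᶜ ⟨n, A, ⟨hA, hAZ⟩, rfl⟩ hxA
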